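/- Let F_q be a finite field of odd characteristic p. The permutation f of F_q defined by f(0) = 1, f(1) = 0, and f(x) = x⁻¹ for x ∉ {0,1} destroys every nonconstant 3-term arithmetic progression (a,b,c) (meaning b − a = c − b ≠ 0) except for the following: if p = 3, the triples whose underlying set is {−1,0,1}; if p > 3, the triples (0, 3/2, 3), (3, 3/2, 0), (1/3, 2/3, 1), and (1, 2/3, 1/3). That is, for any nonconstant 3-term arithmetic progression (a,b,c) not in the stated list, (f(a), f(b), f(c)) is not an arithmetic progression. -/

import Mathlib

/-- The permutation `f` of a finite field `F` of odd characteristic `p`, given by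
`f 0 = 1`, `f 1 = 0` and `f x = x⁻¹` otherwise, destroys every nonconstant 3-term
arithmetic progression except: when `p = 3`, the triples with underlying set
`{-1, 0, 1}`; and when `p > 3`, the triples `(0, 3/2, 3)`, `(3, 3/2, 0)`,
`(1/3, 2/3, 1)` and `(1, 2/3, 1/3)`. -/
theorem inversion_destroys_all_but_finitely_many_aps
    (F : Type*) [Field F] [Fintype F] [DecidableEq F]
    (p : ℕ) [CharP F p] (hodd : Odd p)
    (f : F → F)
    (hf : ∀ x : F, f x = if x = 0 then 1 else if x = 1 then 0 else x⁻¹)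
    (a b c : F) (hAP : b - a = c - b) (hne : b - a ≠ 0)
    (h3 : ¬(p = 3 ∧ ({a, b, c} : Set F) = {-1, 0, 1}))
    (hp3 : ¬(3 < p ∧ ((a, b, c) = ((0 : F), (3 : F) / 2, (3 : F)) ∨
        (a, b, c) = ((3 : F), (3 : F) / 2, (0 : F)) ∨
        (a, b, c) = ((1 : F) / 3, (2 : F) / 3, (1 : F)) ∨
        (a, b, c) = ((1 : F), (2 : F) / 3, (1 : F) / 3)))) :
    f b - f a ≠ f c - f b := by
  intro heq
  have hp : p.Prime := CharP.char_is_prime F p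
  have hp2 : p ≠ 2 := by rintro rfl; rw [Nat.odd_iff] at hodd; omega
  have h2 : (2:F) ≠ 0 := by
    intro h
    have hd : p ∣ 2 := (CharP.cast_eq_zero_iff F p 2).mp (by push_cast; exact h)
    have h1 := hp.two_le
    have h2' := Nat.le_of_dvd (by norm_num) hd
    omega
  have h3z : (3:F) = 0 → p = 3 := by
    intro h
    exact (Nat.prime_dvd_prime_iff_eq hp (by norm_num)).mp
      ((CharP.cast_eq_zero_iff F p 3).mp (by push_cast; exact h))
  have h3lt : (3:F) ≠ 0 → 3 < p := by
    intro h
    by_contra hle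
    push_neg at hle
    have h1 := hp.two_le
    interval_cases p
    · exact hp2 rfl
    · apply h
      have := CharP.cast_eq_zero F 3
      push_cast at this
      exact this
  have f0 : f 0 = 1 := by rw [hf]; simp
  have f1 : f 1 = 0 := by rw [hf]; simp
  have fv : ∀ x : F, x ≠ 0 → x ≠ 1 → f x = x⁻¹ := by
    intro x h0 h1; rw [hf, if_neg h0, if_neg h1]
  have h21 : (2:F) ≠ 1 := by intro h; exact one_ne_zero (by linear_combination h)
  have hc : c = 2 * b - a := by linear_combination -hAP
  subst hc
  have hab : a ≠ b := (sub_ne_zero.mp hne).symm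
  have hba : b ≠ a := Ne.symm hab
  have hac : a ≠ 2 * b - a := by
    intro h
    exact hab (mul_left_cancel₀ h2 (by linear_combination h))
  have hbc : b ≠ 2 * b - a := fun h => hba (by linear_combination -h)
  by_cases ha0 : a = 0
  · subst ha0
    have hb0 : b ≠ 0 := hba
    have hc0 : (2 * b - 0 : F) ≠ 0 := fun h => hb0 (mul_left_cancel₀ h2 (by linear_combination h))
    by_cases hb1 : b = 1
    · -- a=0, b=1, c=2 : char 3 exception
      subst hb1
      rw [f0, f1] at heq
      rw [fv _ hc0 (by intro h; exact one_ne_zero (by linear_combination h))] at heq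
      rw [show (2 * 1 - 0 : F) = 2 by ring] at heq
      have h30 : (3:F) = 0 := by
        field_simp at heq
        linear_combination -heq
      refine h3 ⟨h3z h30, ?_⟩
      rw [show (2 * 1 - 0 : F) = -1 by linear_combination h30]
      clear * -; ext x; simp; tauto
    · by_cases hc1 : 2 * b - 0 = 1
      · -- a=0, c=1, b=1/2 : char 3 exception
        rw [f0, hc1, f1, fv b hb0 hb1] at heq
        have hb2 : b = 2 := by
          field_simp at heq
          linear_combination -heq
        have h30 : (3:F) = 0 := by linear_combination hc1 - 2 * hb2
        refine h3 ⟨h3z h30, ?_⟩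
        rw [hc1, show b = -1 by linear_combination hb2 + h30]
        clear * -; ext x; simp; tauto
      · -- a=0, b,c ∉ {0,1} : triple (0, 3/2, 3)
        rw [f0, fv b hb0 hb1, fv _ hc0 hc1] at heq
        have hb32 : 2 * b = 3 := by
          field_simp at heq
          have key : b * (b * (2 * b - 3)) = 0 := by linear_combination -b * heq
          rcases mul_eq_zero.mp key with h | h
          · exact absurd h hb0
          rcases mul_eq_zero.mp h with h' | h'
          · exact absurd h' hb0
          · exact sub_eq_zero.mp h'
        have h3ne : (3:F) ≠ 0 := by
          intro h
          exact hb0 (mul_left_cancel₀ h2 (show (2:F) * b = 2 * 0 by linear_combination hb32 + h))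
        refine hp3 ⟨h3lt h3ne, Or.inl ?_⟩
        simp only [Prod.mk.injEq]
        refine ⟨trivial, ?_, by linear_combination hb32⟩
        rw [eq_div_iff h2]; linear_combination hb32
  · by_cases ha1 : a = 1
    · subst ha1
      have hb1 : b ≠ 1 := hba
      have hc1 : (2 * b - 1 : F) ≠ 1 := fun h => hb1 (mul_left_cancel₀ h2 (by linear_combination h))
      by_cases hb0 : b = 0
      · -- a=1, b=0, c=-1 : char 3 exception
        subst hb0
        have hm : (2 * 0 - 1 : F) = -1 := by ring
        have hm0 : (2 * 0 - 1 : F) ≠ 0 := by rw [hm]; intro h; exact one_ne_zero (by linear_combination -h)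
        rw [f0, f1, fv _ hm0 hc1, hm] at heq
        have h30 : (3:F) = 0 := by
          rw [show ((-1:F))⁻¹ = -1 by rw [inv_neg, inv_one]] at heq
          linear_combination heq
        refine h3 ⟨h3z h30, ?_⟩
        rw [hm]
        clear * -; ext x; simp; tauto
      · by_cases hc0 : 2 * b - 1 = 0
        · -- a=1, c=0, b=1/2 : char 3 exception
          rw [f1, hc0, f0, fv b hb0 hb1] at heq
          have hb2 : b = 2 := by
            field_simp at heq
            linear_combination -heq
          have h30 : (3:F) = 0 := by linear_combination hc0 - 2 * hb2
          refine h3 ⟨h3z h30, ?_⟩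
          rw [hc0, show b = -1 by linear_combination hb2 + h30]
          clear * -; ext x; simp; tauto
        · -- a=1, b,c ∉ {0,1} : triple (1, 2/3, 1/3)
          rw [f1, fv b hb0 hb1, fv _ hc0 hc1] at heq
          have key : 3 * b = 2 := by
            field_simp at heq
            have e2 : (2 * b - 1) * (2 * b - 1)⁻¹ = 1 := mul_inv_cancel₀ hc0
            linear_combination (2 * b - 1) * heq + b * e2
          have h3ne : (3:F) ≠ 0 := by
            intro h
            exact h2 (by linear_combination -key + b * h)
          refine hp3 ⟨h3lt h3ne, Or.inr (Or.inr (Or.inr ?_))⟩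
          simp only [Prod.mk.injEq]
          refine ⟨trivial, ?_, ?_⟩
          · rw [eq_div_iff h3ne]; linear_combination key
          · rw [eq_div_iff h3ne]; linear_combination 2 * key
    · -- a ∉ {0,1}
      by_cases hb0 : b = 0
      · subst hb0
        have hc0 : (2 * 0 - a : F) ≠ 0 := fun h => ha0 (by linear_combination -h)
        by_cases hc1 : 2 * 0 - a = 1
        · -- b=0, c=1, a=-1 : char 3 exception
          have ham : a = -1 := by linear_combination -hc1
          rw [f0, hc1, f1, fv a ha0 ha1, ham] at heq
          have h30 : (3:F) = 0 := by
            rw [show ((-1:F))⁻¹ = -1 by rw [inv_neg, inv_one]] at heq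
            linear_combination heq
          refine h3 ⟨h3z h30, ?_⟩
          rw [hc1, ham]
        · -- b=0, a,c ∉ {0,1}: contradiction 2=0
          rw [f0, fv a ha0 ha1, fv _ hc0 hc1] at heq
          rw [show (2 * 0 - a : F) = -a by ring, inv_neg] at heq
          apply h2
          linear_combination heq
      · by_cases hb1 : b = 1
        · subst hb1
          by_cases hc0 : 2 * 1 - a = 0
          · -- b=1, c=0, a=2 : char 3 exception
            have ha2 : a = 2 := by linear_combination -hc0
            rw [f1, hc0, f0, fv a ha0 ha1, ha2] at heq
            have h30 : (3:F) = 0 := by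
              field_simp at heq
              linear_combination -heq
            refine h3 ⟨h3z h30, ?_⟩
            rw [hc0, ha2, show (2:F) = -1 by linear_combination h30]
            clear * -; ext x; simp; tauto
          · have hc1 : (2 * 1 - a : F) ≠ 1 := fun h => ha1 (by linear_combination -h)
            -- b=1, a,c ∉ {0,1}: contradiction 2=0
            rw [f1, fv a ha0 ha1, fv _ hc0 hc1] at heq
            have h2a : (2 - a : F) ≠ 0 := fun h => hc0 (by linear_combination h)
            apply h2
            field_simp [h2a] at heq
            linear_combination -heq
        · -- b ∉ {0,1}
          by_cases hc0 : 2 * b - a = 0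
          · -- c=0, a,b ∉ {0,1}: triple (3, 3/2, 0)
            rw [fv a ha0 ha1, fv b hb0 hb1, hc0, f0] at heq
            have hb32 : 2 * b = 3 := by
              have ha2b : a = 2 * b := by linear_combination -hc0
              rw [ha2b] at heq
              field_simp at heq
              have key : b * (2 * b - 3) = 0 := by linear_combination -b * heq
              rcases mul_eq_zero.mp key with h | h
              · exact absurd h hb0
              · exact sub_eq_zero.mp h
            have h3ne : (3:F) ≠ 0 := by
              intro h
              exact hb0 (mul_left_cancel₀ h2 (show (2:F) * b = 2 * 0 by linear_combination hb32 + h))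
            refine hp3 ⟨h3lt h3ne, Or.inr (Or.inl ?_)⟩
            simp only [Prod.mk.injEq]
            refine ⟨by linear_combination -hc0 + hb32, ?_, by linear_combination hc0⟩
            rw [eq_div_iff h2]; linear_combination hb32
          · by_cases hc1 : 2 * b - a = 1
            · -- c=1, a,b ∉ {0,1}: triple (1/3, 2/3, 1)
              rw [fv a ha0 ha1, fv b hb0 hb1, hc1, f1] at heq
              have key : 3 * b = 2 := by
                have ha2b : a = 2 * b - 1 := by linear_combination -hc1
                have hd : (2 * b - 1 : F) ≠ 0 := by
                  intro h; exact ha0 (by rw [ha2b, h])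
                rw [ha2b] at heq
                field_simp [hd] at heq
                have e2 : (2 * b - 1) * (2 * b - 1)⁻¹ = 1 := mul_inv_cancel₀ hd
                have key0 : b * (3 * b - 2) = 0 := by linear_combination b * (2 * b - 1) * heq + b * b * e2
                rcases mul_eq_zero.mp key0 with h | h
                · exact absurd h hb0
                · exact sub_eq_zero.mp h
              have h3ne : (3:F) ≠ 0 := by
                intro h
                exact h2 (by linear_combination -key + b * h)
              refine hp3 ⟨h3lt h3ne, Or.inr (Or.inr (Or.inl ?_))⟩
              simp only [Prod.mk.injEq]
              refine ⟨?_, ?_, by linear_combination hc1⟩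
              · rw [eq_div_iff h3ne]; linear_combination 2 * key - 3 * hc1
              · rw [eq_div_iff h3ne]; linear_combination key
            · -- generic: a,b,c ∉ {0,1}
              rw [fv a ha0 ha1, fv b hb0 hb1, fv _ hc0 hc1] at heq
              have key : 2 * (b * ((a - b) * (a - b))) = 0 := by
                field_simp at heq
                have e2 : (2 * b - a) * (2 * b - a)⁻¹ = 1 := mul_inv_cancel₀ hc0
                linear_combination -b * (2 * b - a) * heq - a * b * b * e2
              rcases mul_eq_zero.mp key with h | h
              · exact absurd h h2
              rcases mul_eq_zero.mp h with h' | h'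
              · exact absurd h' hb0
              rcases mul_eq_zero.mp h' with h'' | h''
              · exact hab (sub_eq_zero.mp h'')
              · exact hab (sub_eq_zero.mp h'')
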